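/- Fix n, t, s, q ∈ ℕ with n ≥ 1 and set N = n + t, and let 𝒢 be a finite gate set whose gates all have arity at most q, with circuits and the relation "a circuit computes f" (success probability strictly greater than 1/2 on every input) defined as follows: a circuit of size k over 𝒢 on N qubits is a list of k pairs (gate, injective wire assignment), its operator C is the composition of the gate applications, and it computes f : (Fin n → Fin 2) → Fin 2 if ‖Π_{f(x)}(C e_{pad(x)})‖² > 1/2 for every x. If (card(𝒢) · N^q + 1)^s < 2^(2^n), then there exists a Boolean function f : (Fin n → Fin 2) → Fin 2 that is not computed by any circuit over 𝒢 of size at most s on N qubits. (Existence of Boolean functions of quantum circuit complexity exceeding s; the conclusion of the paper's counting claim, Claim C.1.) -/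

import Mathlib

/-- `pad n t x` is the length-`(n+t)` bitstring equal to `x` on the first `n`
coordinates and `0` on the remaining `t`. -/
def pad (n t : ℕ) (x : Fin n → Fin 2) : Fin (n + t) → Fin 2 :=
  fun j => if h : (j : ℕ) < n then x ⟨j, h⟩ else 0

/-- Orthogonal projection onto bitstrings whose first bit equals `b`. -/
def firstBitProj {N : ℕ} (hN : 0 < N) (b : Fin 2)
    (v : EuclideanSpace ℂ (Fin N → Fin 2)) : EuclideanSpace ℂ (Fin N → Fin 2) :=
  WithLp.toLp 2 (fun s => if s ⟨0, hN⟩ = b then v s else 0)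

/-- A quantum gate: an arity (at most `q`) together with a unitary on the
corresponding space. -/
structure Gate (q : ℕ) where
  arity : ℕ
  arity_le : arity ≤ q
  U : EuclideanSpace ℂ (Fin arity → Fin 2) ≃ₗᵢ[ℂ] EuclideanSpace ℂ (Fin arity → Fin 2)

/-- `updAt emb σ c` agrees with `σ` off the range of `emb` and equals `c k` at
`emb k`. -/
noncomputable def updAt {a N : ℕ} (emb : Fin a → Fin N) (σ : Fin N → Fin 2)
    (c : Fin a → Fin 2) : Fin N → Fin 2 :=
  fun j => if h : ∃ k, emb k = j then c h.choose else σ j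

/-- Application of a gate `g` along an (injective) wire assignment
`emb : Fin g.arity → Fin N`. -/
noncomputable def applyGate {q N : ℕ} (g : Gate q) (emb : Fin g.arity → Fin N)
    (v : EuclideanSpace ℂ (Fin N → Fin 2)) : EuclideanSpace ℂ (Fin N → Fin 2) :=
  WithLp.toLp 2 (fun σ => ∑ c : Fin g.arity → Fin 2,
    (g.U (EuclideanSpace.single c 1)) (σ ∘ emb) * v (updAt emb σ c))

/-- One step of a circuit over the gate set `G`: a gate together with an
injective wire assignment. -/
structure CircuitStep (q N : ℕ) {ι : Type*} (G : ι → Gate q) where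
  gate : ι
  wires : Fin (G gate).arity → Fin N
  inj : Function.Injective wires

/-- The operator of a circuit: the composition of the gate applications in
order. -/
noncomputable def circuitOp {q N : ℕ} {ι : Type*} (G : ι → Gate q) :
    List (CircuitStep q N G) →
      EuclideanSpace ℂ (Fin N → Fin 2) → EuclideanSpace ℂ (Fin N → Fin 2)
  | [] => id
  | step :: rest => fun v => circuitOp G rest (applyGate (G step.gate) step.wires v)


noncomputable def splitEquiv {a N : ℕ} (emb : Fin a → Fin N) (hinj : Function.Injective emb) :
    (Fin N → Fin 2) ≃ (Fin a → Fin 2) × ({j : Fin N // ¬∃ k, emb k = j} → Fin 2) where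
  toFun σ := (σ ∘ emb, fun j => σ j.1)
  invFun p := fun j => if h : ∃ k, emb k = j then p.1 h.choose else p.2 ⟨j, h⟩
  left_inv σ := by
    funext j
    by_cases h : ∃ k, emb k = j
    · simp only [dif_pos h]; exact congrArg σ h.choose_spec
    · simp only [dif_neg h]
  right_inv p := by
    refine Prod.ext ?_ ?_
    · funext k
      have h : ∃ k', emb k' = emb k := ⟨k, rfl⟩
      simp only [Function.comp_apply, dif_pos h]
      exact congrArg p.1 (hinj h.choose_spec)
    · funext j
      simp only [dif_neg j.2]

-- basis expansion
lemma apply_eval {a : ℕ}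
    (U : EuclideanSpace ℂ (Fin a → Fin 2) ≃ₗᵢ[ℂ] EuclideanSpace ℂ (Fin a → Fin 2))
    (w : EuclideanSpace ℂ (Fin a → Fin 2)) (b : Fin a → Fin 2) :
    U w b = ∑ c, U (EuclideanSpace.single c 1) b * w c := by
  have hw : w = ∑ c, w c • EuclideanSpace.single c (1:ℂ) := by
    ext d
    rw [WithLp.ofLp_sum, Finset.sum_apply]
    simp [EuclideanSpace.single_apply, eq_comm]
  conv_lhs => rw [hw]
  rw [map_sum]
  rw [WithLp.ofLp_sum, Finset.sum_apply]
  congr 1; funext c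
  simp [mul_comm]

lemma euclid_sq {I : Type*} [Fintype I] (v : EuclideanSpace ℂ I) :
    ‖v‖ ^ 2 = ∑ i, ‖v i‖ ^ 2 := by
  rw [EuclideanSpace.norm_eq, Real.sq_sqrt]; positivity

lemma applyGate_apply {q N : ℕ} (g : Gate q) (emb : Fin g.arity → Fin N)
    (hinj : Function.Injective emb) (v : EuclideanSpace ℂ (Fin N → Fin 2))
    (σ : Fin N → Fin 2) :
    applyGate g emb v σ
      = g.U (WithLp.toLp 2 (fun c => v ((splitEquiv emb hinj).symm (c, fun j => σ j.1)))) (σ ∘ emb) := by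
  rw [apply_eval]
  rfl

lemma applyGate_norm {q N : ℕ} (g : Gate q) (emb : Fin g.arity → Fin N)
    (hinj : Function.Injective emb) (v : EuclideanSpace ℂ (Fin N → Fin 2)) :
    ‖applyGate g emb v‖ = ‖v‖ := by
  set E := splitEquiv emb hinj with hE
  set w : ({j : Fin N // ¬∃ k, emb k = j} → Fin 2) → EuclideanSpace ℂ (Fin g.arity → Fin 2) :=
    fun τ => WithLp.toLp 2 (fun c => v (E.symm (c, τ))) with hw
  have h2 : ‖applyGate g emb v‖ ^ 2 = ‖v‖ ^ 2 := by
    rw [euclid_sq, euclid_sq]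
    calc ∑ σ, ‖applyGate g emb v σ‖ ^ 2
        = ∑ p : (Fin g.arity → Fin 2) × ({j : Fin N // ¬∃ k, emb k = j} → Fin 2),
            ‖applyGate g emb v (E.symm p)‖ ^ 2 :=
          (E.symm.sum_comp (fun σ => ‖applyGate g emb v σ‖ ^ 2)).symm
      _ = ∑ p : (Fin g.arity → Fin 2) × ({j : Fin N // ¬∃ k, emb k = j} → Fin 2),
            ‖g.U (w p.2) p.1‖ ^ 2 := by
            refine Finset.sum_congr rfl fun p _ => ?_
            have h1 : (E.symm p) ∘ emb = p.1 := congrArg Prod.fst (E.apply_symm_apply p)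
            have h2 : (fun j : {j : Fin N // ¬∃ k, emb k = j} => (E.symm p) j.1) = p.2 :=
              congrArg Prod.snd (E.apply_symm_apply p)
            have h3 : WithLp.toLp 2 (fun c => v ((splitEquiv emb hinj).symm
                (c, fun j : {j : Fin N // ¬∃ k, emb k = j} => (E.symm p) j.1))) = w p.2 := by
              ext c; exact congrArg (fun τ => v (E.symm (c, τ))) h2
            rw [applyGate_apply g emb hinj, h1, h3]
      _ = ∑ b, ∑ τ, ‖g.U (w τ) b‖ ^ 2 :=
          Fintype.sum_prod_type (f := fun p => ‖g.U (w p.2) p.1‖ ^ 2)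
      _ = ∑ τ, ∑ b, ‖g.U (w τ) b‖ ^ 2 := Finset.sum_comm
      _ = ∑ τ, ‖g.U (w τ)‖ ^ 2 := Finset.sum_congr rfl fun τ _ => (euclid_sq _).symm
      _ = ∑ τ, ‖w τ‖ ^ 2 := by
            refine Finset.sum_congr rfl fun τ _ => ?_
            rw [g.U.norm_map]
      _ = ∑ τ, ∑ c, ‖w τ c‖ ^ 2 := Finset.sum_congr rfl fun τ _ => euclid_sq _
      _ = ∑ c, ∑ τ, ‖w τ c‖ ^ 2 := Finset.sum_comm
      _ = ∑ p : (Fin g.arity → Fin 2) × ({j : Fin N // ¬∃ k, emb k = j} → Fin 2),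
            ‖v (E.symm p)‖ ^ 2 :=
          (Fintype.sum_prod_type (f := fun p => ‖v (E.symm p)‖ ^ 2)).symm
      _ = ∑ σ, ‖v σ‖ ^ 2 := E.symm.sum_comp (fun σ => ‖v σ‖ ^ 2)
  nlinarith [norm_nonneg (applyGate g emb v), norm_nonneg v, h2]

lemma circuitOp_norm {q N : ℕ} {ι : Type*} (G : ι → Gate q)
    (C : List (CircuitStep q N G)) (v : EuclideanSpace ℂ (Fin N → Fin 2)) :
    ‖circuitOp G C v‖ = ‖v‖ := by
  induction C generalizing v with
  | nil => rfl
  | cons step rest ih =>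
      rw [circuitOp, ih, applyGate_norm _ _ step.inj]

lemma firstBitProj_sq {N : ℕ} (hN : 0 < N) (b : Fin 2)
    (v : EuclideanSpace ℂ (Fin N → Fin 2)) :
    ‖firstBitProj hN b v‖ ^ 2 = ∑ σ, if σ ⟨0, hN⟩ = b then ‖v σ‖ ^ 2 else 0 := by
  rw [euclid_sq]
  refine Finset.sum_congr rfl fun σ _ => ?_
  by_cases h : σ ⟨0, hN⟩ = b <;> simp [firstBitProj, h]

lemma computes_unique {n t q : ℕ} {ι : Type*} (G : ι → Gate q)
    (C : List (CircuitStep q (n + t) G)) (hN : 0 < n + t) (f g : (Fin n → Fin 2) → Fin 2)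
    (hf : ∀ x, 1 / 2 < ‖firstBitProj hN (f x)
      (circuitOp G C (EuclideanSpace.single (pad n t x) 1))‖ ^ 2)
    (hg : ∀ x, 1 / 2 < ‖firstBitProj hN (g x)
      (circuitOp G C (EuclideanSpace.single (pad n t x) 1))‖ ^ 2) :
    f = g := by
  funext x
  by_contra hx
  set v := circuitOp G C (EuclideanSpace.single (pad n t x) 1) with hv
  have hnorm : ‖v‖ = 1 := by
    rw [hv, circuitOp_norm, EuclideanSpace.norm_single]; norm_num
  have hsum : ‖firstBitProj hN (f x) v‖ ^ 2 + ‖firstBitProj hN (g x) v‖ ^ 2 ≤ ‖v‖ ^ 2 := by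
    rw [firstBitProj_sq, firstBitProj_sq, ← Finset.sum_add_distrib, euclid_sq]
    refine Finset.sum_le_sum fun σ _ => ?_
    by_cases h : σ ⟨0, hN⟩ = f x
    · have h' : ¬ σ ⟨0, hN⟩ = g x := fun h2 => hx (h ▸ h2)
      simp [h, h', hx]
    · by_cases h' : σ ⟨0, hN⟩ = g x
      · simp [h, h', Ne.symm hx]
      · simp only [if_neg h, if_neg h', add_zero]
        positivity
  rw [hnorm] at hsum
  have := hf x
  have := hg x
  norm_num at hsum this ⊢
  linarith

/-- Encoding of a circuit step as a pair. -/
noncomputable def encStep {q N : ℕ} {ι : Type*} (hN : 0 < N) (G : ι → Gate q)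
    (st : CircuitStep q N G) : ι × (Fin q → Fin N) :=
  ⟨st.gate, fun j => if h : (j : ℕ) < (G st.gate).arity then st.wires ⟨j, h⟩ else ⟨0, hN⟩⟩

lemma encStep_inj {q N : ℕ} {ι : Type*} (hN : 0 < N) (G : ι → Gate q) :
    Function.Injective (encStep hN G) := by
  rintro ⟨i1, w1, p1⟩ ⟨i2, w2, p2⟩ h
  obtain ⟨h1, h2⟩ := Prod.mk.injEq .. ▸ h
  subst h1
  have hw : w1 = w2 := by
    funext k
    have hk : (k : ℕ) < q := lt_of_lt_of_le k.2 (G i1).arity_le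
    have := congrFun h2 ⟨k, hk⟩
    simpa [k.2] using this
  subst hw
  rfl

/-- If `(card 𝒢 · N^q + 1)^s < 2^(2^n)` then there exists a Boolean function
`f : {0,1}ⁿ → {0,1}` not computed (with per-input success probability `> 1/2`)
by any circuit of size at most `s` over the gate set `G` on `N = n + t`
qubits. -/
theorem exists_hard_function (n t s q : ℕ) (hn : 1 ≤ n)
    {ι : Type*} [Fintype ι] (G : ι → Gate q)
    (hcount : (Fintype.card ι * (n + t) ^ q + 1) ^ s < 2 ^ (2 ^ n)) :
    ∃ f : (Fin n → Fin 2) → Fin 2,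
      ¬ ∃ C : List (CircuitStep q (n + t) G), C.length ≤ s ∧
          ∀ x, 1 / 2 < ‖firstBitProj (show 0 < n + t by omega) (f x)
            (circuitOp G C (EuclideanSpace.single (pad n t x) 1))‖ ^ 2 := by
  by_contra hc
  push_neg at hc
  have hN : 0 < n + t := by omega
  choose Cf hlen hcomp using hc
  set Φ : ((Fin n → Fin 2) → Fin 2) → (Fin s → Option (ι × (Fin q → Fin (n + t)))) :=
    fun f j => if h : (j : ℕ) < (Cf f).length then some (encStep hN G ((Cf f).get ⟨j, h⟩))
      else none with hΦ
  have hinj : Function.Injective Φ := by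
    intro f g hfg
    have hCl : (Cf f).length = (Cf g).length := by
      by_contra hne
      wlog hlt : (Cf f).length < (Cf g).length generalizing f g
      · exact this hfg.symm (Ne.symm hne) (by omega)
      have := congrFun hfg ⟨(Cf f).length, lt_of_lt_of_le hlt (hlen g)⟩
      simp only [hΦ] at this
      rw [dif_neg (by simp), dif_pos (by simpa using hlt)] at this
      simp at this
    have hCeq : Cf f = Cf g := by
      refine List.ext_get hCl fun j hj1 hj2 => ?_
      have := congrFun hfg ⟨j, lt_of_lt_of_le hj1 (hlen f)⟩
      simp only [hΦ] at this
      rw [dif_pos (by simpa using hj1), dif_pos (by simpa using hj2)] at this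
      exact encStep_inj hN G (Option.some.inj this)
    exact computes_unique G (Cf f) hN f g (hcomp f) (hCeq ▸ hcomp g)
  have hcard := Fintype.card_le_of_injective Φ hinj
  have h1 : Fintype.card ((Fin n → Fin 2) → Fin 2) = 2 ^ (2 ^ n) := by
    simp [Fintype.card_fun]
  have h2 : Fintype.card (Fin s → Option (ι × (Fin q → Fin (n + t))))
      = (Fintype.card ι * (n + t) ^ q + 1) ^ s := by
    simp [Fintype.card_fun]
  rw [h1, h2] at hcard
  omega
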